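/- Let H be a real Hilbert space, M a nonempty subset of H whose affine span is dense in H, and (x_k) a sequence in H that is Fejér* monotone with respect to M. Then (x_k) converges weakly; that is, there exists w ∈ H such that ⟨x_k, y⟩ → ⟨w, y⟩ for every y ∈ H. -/

import Mathlib

open scoped RealInnerProductSpace

/-- Fejér* monotonicity: for every `x ∈ M` there is an index `N` from which the
distances to `x` are nonincreasing. -/
def FejerStarMonotone {H : Type*} [NormedAddCommGroup H] [InnerProductSpace ℝ H]
    (x : ℕ → H) (M : Set H) : Prop :=
  ∀ p ∈ M, ∃ N : ℕ, ∀ k ≥ N, ‖x (k + 1) - p‖ ≤ ‖x k - p‖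

/-- `x` converges weakly to `w`: inner products with every vector converge. -/
def WeakTendsto {H : Type*} [NormedAddCommGroup H] [InnerProductSpace ℝ H]
    (x : ℕ → H) (w : H) : Prop :=
  ∀ y : H, Filter.Tendsto (fun k => ⟪x k, y⟫) Filter.atTop (nhds ⟪w, y⟫)

/-- `w` is a weak cluster point of `x`: some subsequence converges weakly to `w`. -/
def IsWeakClusterPt {H : Type*} [NormedAddCommGroup H] [InnerProductSpace ℝ H]
    (x : ℕ → H) (w : H) : Prop :=
  ∃ φ : ℕ → ℕ, StrictMono φ ∧ WeakTendsto (x ∘ φ) w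

/-- `w` is a strong cluster point of `x`: some subsequence converges to `w` in norm. -/
def IsStrongClusterPt {H : Type*} [NormedAddCommGroup H] [InnerProductSpace ℝ H]
    (x : ℕ → H) (w : H) : Prop :=
  ∃ φ : ℕ → ℕ, StrictMono φ ∧ Filter.Tendsto (x ∘ φ) Filter.atTop (nhds w)

open Filter

lemma fejer_aux_lim (f : ℕ → ℝ) (N : ℕ) (h0 : ∀ k, 0 ≤ f k)
    (h : ∀ k ≥ N, f (k + 1) ≤ f k) : ∃ ℓ, Tendsto f atTop (nhds ℓ) := by
  have hanti : Antitone fun k => f (k + N) :=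
    antitone_nat_of_succ_le fun k => by
      simpa [Nat.add_right_comm] using h (k + N) (Nat.le_add_left _ _)
  have hbdd : BddBelow (Set.range fun k => f (k + N)) := by
    refine ⟨0, ?_⟩; rintro _ ⟨k, rfl⟩; exact h0 _
  exact ⟨_, (tendsto_add_atTop_iff_nat N).mp (tendsto_atTop_ciInf hanti hbdd)⟩

theorem fejerStar_weak_convergence_of_denseAffineSpan {H : Type*} [NormedAddCommGroup H]
    [InnerProductSpace ℝ H] [CompleteSpace H] (M : Set H) (hM : M.Nonempty) (x : ℕ → H)
    (hx : FejerStarMonotone x M)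
    (hdense : closure (affineSpan ℝ M : Set H) = Set.univ) :
    ∃ w : H, WeakTendsto x w := by
  obtain ⟨p₀, hp₀⟩ := hM
  -- limits of distances
  have hlim : ∀ p ∈ M, ∃ ℓ : ℝ, Tendsto (fun k => ‖x k - p‖) atTop (nhds ℓ) := by
    intro p hp
    obtain ⟨N, hN⟩ := hx p hp
    exact fejer_aux_lim _ N (fun k => norm_nonneg _) hN
  -- boundedness
  obtain ⟨N₀, hN₀⟩ := hx p₀ hp₀
  have htail : ∀ k, ‖x (k + N₀) - p₀‖ ≤ ‖x N₀ - p₀‖ := by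
    intro k
    induction k with
    | zero => simp
    | succ n ih =>
      have h1 : n + 1 + N₀ = n + N₀ + 1 := by omega
      rw [h1]
      exact le_trans (hN₀ (n + N₀) (Nat.le_add_left _ _)) ih
  set B : ℝ := (Finset.range (N₀ + 1)).sup' (by simp) (fun i => ‖x i - p₀‖) with hB
  have hBk : ∀ k, ‖x k - p₀‖ ≤ B := by
    intro k
    rcases le_or_gt k N₀ with h | h
    · exact Finset.le_sup' (fun i => ‖x i - p₀‖) (Finset.mem_range.mpr (Nat.lt_succ_of_le h))
    · have hk : k = (k - N₀) + N₀ := by omega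
      rw [hk]
      exact le_trans (htail _) (Finset.le_sup' (fun i => ‖x i - p₀‖) (Finset.self_mem_range_succ N₀))
  set C : ℝ := B + ‖p₀‖ with hC
  have hCk : ∀ k, ‖x k‖ ≤ C := by
    intro k
    calc ‖x k‖ = ‖x k - p₀ + p₀‖ := by rw [sub_add_cancel]
    _ ≤ ‖x k - p₀‖ + ‖p₀‖ := norm_add_le _ _
    _ ≤ C := add_le_add_left (hBk k) _
  have hC0 : 0 ≤ C := le_trans (norm_nonneg _) (hCk 0)
  -- inner products with differences converge
  have hdiff : ∀ q ∈ M, ∃ c : ℝ, Tendsto (fun k => ⟪x k, q - p₀⟫) atTop (nhds c) := by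
    intro q hq
    obtain ⟨ℓp, hℓp⟩ := hlim p₀ hp₀
    obtain ⟨ℓq, hℓq⟩ := hlim q hq
    refine ⟨(ℓp ^ 2 - ℓq ^ 2 + ‖q‖ ^ 2 - ‖p₀‖ ^ 2) / 2, ?_⟩
    have key : ∀ k, ⟪x k, q - p₀⟫ =
        (‖x k - p₀‖ ^ 2 - ‖x k - q‖ ^ 2 + ‖q‖ ^ 2 - ‖p₀‖ ^ 2) / 2 := by
      intro k
      have h1 := @norm_sub_sq_real H _ _ (x k) p₀
      have h2 := @norm_sub_sq_real H _ _ (x k) q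
      have h3 : ⟪x k, q - p₀⟫ = ⟪x k, q⟫ - ⟪x k, p₀⟫ := inner_sub_right _ _ _
      rw [h3]
      linarith [h1, h2]
    simp only [key]
    exact ((((hℓp.pow 2).sub (hℓq.pow 2)).add_const _).sub_const _).div_const 2
  -- inner products with span elements converge
  set V : Submodule ℝ H := Submodule.span ℝ ((· -ᵥ p₀) '' M) with hV
  have hspan : ∀ v ∈ V, ∃ c : ℝ, Tendsto (fun k => ⟪x k, v⟫) atTop (nhds c) := by
    intro v hv
    induction hv using Submodule.span_induction with
    | mem v hvmem =>
      obtain ⟨q, hq, rfl⟩ := hvmem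
      exact hdiff q hq
    | zero => exact ⟨0, by simp⟩
    | add u v hu hv ihu ihv =>
      obtain ⟨c, hc⟩ := ihu; obtain ⟨d, hd⟩ := ihv
      exact ⟨c + d, by simpa [inner_add_right] using hc.add hd⟩
    | smul a v hv ihv =>
      obtain ⟨c, hc⟩ := ihv
      exact ⟨a * c, by simpa [inner_smul_right] using hc.const_mul a⟩
  -- V is dense
  have hVdense : Dense (V : Set H) := by
    have hdir : (V : Set H) = (Homeomorph.subRight p₀) '' (affineSpan ℝ M : Set H) := by
      rw [hV, ← vectorSpan_eq_span_vsub_set_right ℝ hp₀, ← direction_affineSpan]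
      exact AffineSubspace.coe_direction_eq_vsub_set_right (mem_affineSpan ℝ hp₀)
    rw [dense_iff_closure_eq, hdir, ← Homeomorph.image_closure, hdense, Set.image_univ,
      Homeomorph.range_coe]
  -- every inner product sequence is Cauchy
  have hCauchy : ∀ y : H, ∃ c : ℝ, Tendsto (fun k => ⟪x k, y⟫) atTop (nhds c) := by
    intro y
    have hcs : CauchySeq fun k => ⟪x k, y⟫ := by
      rw [Metric.cauchySeq_iff]
      intro ε hε
      have hδ : (0:ℝ) < ε / (4 * C + 2) := by positivity
      obtain ⟨v, hvball, hvV⟩ := Metric.dense_iff.mp hVdense y (ε / (4 * C + 2)) hδ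
      have hvy : ‖y - v‖ < ε / (4 * C + 2) := by
        rw [← dist_eq_norm]
        exact dist_comm y v ▸ Metric.mem_ball.mp hvball
      obtain ⟨c, hc⟩ := hspan v hvV
      obtain ⟨N, hN⟩ := Metric.cauchySeq_iff.mp hc.cauchySeq (ε / 2) (by positivity)
      refine ⟨N, fun m hm n hn => ?_⟩
      have hmn : ⟪x m, y⟫ - ⟪x n, y⟫ = (⟪x m, v⟫ - ⟪x n, v⟫) + ⟪x m - x n, y - v⟫ := by
        simp only [inner_sub_left, inner_sub_right]; ring
      have h1 : |⟪x m, v⟫ - ⟪x n, v⟫| < ε / 2 := by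
        have := hN m hm n hn
        rwa [Real.dist_eq] at this
      have h2 : |⟪x m - x n, y - v⟫| ≤ ε / 2 := by
        calc |⟪x m - x n, y - v⟫| ≤ ‖x m - x n‖ * ‖y - v‖ := abs_real_inner_le_norm _ _
        _ ≤ (2 * C) * (ε / (4 * C + 2)) := by
            apply mul_le_mul _ hvy.le (norm_nonneg _) (by positivity)
            calc ‖x m - x n‖ ≤ ‖x m‖ + ‖x n‖ := norm_sub_le _ _
            _ ≤ 2 * C := by linarith [hCk m, hCk n]
        _ ≤ ε / 2 := by
            have heq : 2 * C * (ε / (4 * C + 2)) = (2 * C * ε) / (4 * C + 2) := by ring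
            rw [heq, div_le_div_iff₀ (by positivity) (by norm_num : (0:ℝ) < 2)]
            nlinarith [hε, hC0]
      rw [Real.dist_eq, hmn]
      calc |(⟪x m, v⟫ - ⟪x n, v⟫) + ⟪x m - x n, y - v⟫|
          ≤ |⟪x m, v⟫ - ⟪x n, v⟫| + |⟪x m - x n, y - v⟫| := abs_add_le _ _
        _ < ε := by linarith
    exact cauchySeq_tendsto_of_complete hcs
  -- build the weak limit
  choose c hc using hCauchy
  have hbound : ∀ y : H, |c y| ≤ C * ‖y‖ := by
    intro y
    refine le_of_tendsto (hc y).abs (Filter.Eventually.of_forall fun k => ?_)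
    exact le_trans (abs_real_inner_le_norm _ _)
      (mul_le_mul_of_nonneg_right (hCk k) (norm_nonneg _))
  have hadd : ∀ y z : H, c (y + z) = c y + c z := fun y z =>
    tendsto_nhds_unique (hc (y + z)) (by simpa [inner_add_right] using (hc y).add (hc z))
  have hsmul : ∀ (a : ℝ) (y : H), c (a • y) = a * c y := fun a y =>
    tendsto_nhds_unique (hc (a • y))
      (by simpa [inner_smul_right] using (hc y).const_mul a)
  let L : H →ₗ[ℝ] ℝ :=
    { toFun := c, map_add' := hadd, map_smul' := hsmul }
  let Lc : H →L[ℝ] ℝ := L.mkContinuous C fun y => by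
    simpa [Real.norm_eq_abs, L] using hbound y
  refine ⟨(InnerProductSpace.toDual ℝ H).symm Lc, fun y => ?_⟩
  rw [InnerProductSpace.toDual_symm_apply]
  exact hc y
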